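/- Let T > 0, H ∈ (0,1), K > 0, and let φ : (0,2T] → ℝ be differentiable on (0,2T] with |φ′(u)| ≤ K u^{H-3/2} for all u ∈ (0,2T]. Then there exists a constant C > 0, depending only on T, H and K, such that for all h ∈ (0,T], (∫₀^T (φ(t+h) − φ(t))² dt)^{1/2} ≤ C h^{H}. -/

import Mathlib

open MeasureTheory Set

lemma fencing {φ φ' : ℝ → ℝ} {a b c q : ℝ} (ha : 0 < a) (hab : a ≤ b) (hq : 0 < q)
    (hderiv : ∀ u ∈ Set.Icc a b, HasDerivAt φ (φ' u) u)
    (hbound : ∀ u ∈ Set.Icc a b, |φ' u| ≤ c * u ^ (q - 1)) :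
    |φ b - φ a| ≤ (c / q) * (b ^ q - a ^ q) := by
  set B : ℝ → ℝ := fun u => (c / q) * (u ^ q - a ^ q) with hBdef
  have hf : ContinuousOn (fun u => φ u - φ a) (Set.Icc a b) :=
    fun x hx => ((hderiv x hx).continuousAt.continuousWithinAt).sub continuousWithinAt_const
  have hf' : ∀ x ∈ Set.Ico a b, HasDerivWithinAt (fun u => φ u - φ a) (φ' x) (Set.Ici x) x :=
    fun x hx => ((hderiv x (Set.Ico_subset_Icc_self hx)).sub_const (φ a)).hasDerivWithinAt
  have ha0 : ‖φ a - φ a‖ ≤ B a := by simp [B]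
  have hBc : ContinuousOn B (Set.Icc a b) := by
    apply ContinuousOn.mul continuousOn_const
    apply ContinuousOn.sub _ continuousOn_const
    exact fun x hx =>
      (Real.continuousAt_rpow_const x q (Or.inl (ne_of_gt (lt_of_lt_of_le ha hx.1)))).continuousWithinAt
  have hB' : ∀ x ∈ Set.Ico a b, HasDerivWithinAt B (c * x ^ (q - 1)) (Set.Ici x) x := by
    intro x hx
    have hx0 : x ≠ 0 := ne_of_gt (lt_of_lt_of_le ha hx.1)
    have h2 : HasDerivAt B (c / q * (q * x ^ (q - 1))) x :=
      ((Real.hasDerivAt_rpow_const (x := x) (p := q) (Or.inl hx0)).sub_const (a ^ q)).const_mul (c / q)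
    have heq : c / q * (q * x ^ (q - 1)) = c * x ^ (q - 1) := by field_simp
    rw [heq] at h2
    exact h2.hasDerivWithinAt
  have bound : ∀ x ∈ Set.Ico a b, ‖φ' x‖ ≤ c * x ^ (q - 1) :=
    fun x hx => hbound x (Set.Ico_subset_Icc_self hx)
  have key := image_norm_le_of_norm_deriv_right_le_deriv_boundary' hf hf' ha0 hBc hB' bound
    (Set.right_mem_Icc.2 hab)
  simpa [B] using key

lemma sq_rpow' {x : ℝ} (p : ℝ) (hx : 0 < x) : (x ^ p)^2 = x ^ (2*p) := by
  rw [sq, ← Real.rpow_add hx, two_mul]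

/-- fourth estimate of Lemma 3.1. -/
theorem stmt_3 (T H K : ℝ) (hT : 0 < T) (hH : H ∈ Set.Ioo (0:ℝ) 1) (hK : 0 < K)
    (φ φ' : ℝ → ℝ)
    (hderiv : ∀ u ∈ Set.Ioc (0:ℝ) (2*T), HasDerivAt φ (φ' u) u)
    (hbound : ∀ u ∈ Set.Ioc (0:ℝ) (2*T), |φ' u| ≤ K * u ^ (H - 3/2)) :
    ∃ C > 0, ∀ h ∈ Set.Ioc (0:ℝ) T,
      (∫ t in Set.Ioc (0:ℝ) T, (φ (t + h) - φ t)^2) ^ ((1:ℝ)/2) ≤ C * h ^ H := by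
  obtain ⟨hH0, hH1⟩ := hH
  set A : ℝ := K^2 * (4/H^2) * 2^H with hAdef
  have hA : 0 < A := by positivity
  set D : ℝ := A / H + K^2 / (2 - 2*H) with hDdef
  have hD : 0 < D := by
    have : 0 < 2 - 2*H := by linarith
    positivity
  refine ⟨D ^ ((1:ℝ)/2), Real.rpow_pos_of_pos hD _, ?_⟩
  intro h hh
  obtain ⟨hh0, hhT⟩ := hh
  -- continuity of φ on Ioc 0 2T
  have hcont : ContinuousOn φ (Set.Ioc 0 (2*T)) :=
    fun u hu => (hderiv u hu).continuousAt.continuousWithinAt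
  set g : ℝ → ℝ := fun t => (φ (t + h) - φ t)^2 with hgdef
  have hgcont : ContinuousOn g (Set.Ioc 0 T) := by
    have h1 : ContinuousOn (fun t => φ (t + h)) (Set.Ioc 0 T) := by
      apply hcont.comp ((continuous_id.add continuous_const).continuousOn)
      intro t ht
      have : (0:ℝ) < t + h ∧ t + h ≤ 2*T := ⟨by linarith [ht.1], by linarith [ht.2]⟩
      simpa using this
    have h2 : ContinuousOn φ (Set.Ioc 0 T) :=
      hcont.mono (Set.Ioc_subset_Ioc le_rfl (by linarith))
    exact (h1.sub h2).pow 2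
  -- pointwise bound on Ioc 0 h
  have step1 : ∀ t ∈ Set.Ioc (0:ℝ) h, g t ≤ A * h ^ H * t ^ (H - 1) := by
    intro t ht
    obtain ⟨ht0, hth⟩ := ht
    have hsub : Set.Icc t (t + h) ⊆ Set.Ioc (0:ℝ) (2*T) := by
      intro u hu
      exact ⟨lt_of_lt_of_le ht0 hu.1, by linarith [hu.2]⟩
    have hq : (0:ℝ) < H/2 := by linarith
    have hb : ∀ u ∈ Set.Icc t (t + h), |φ' u| ≤ (K * t ^ ((H-1)/2)) * u ^ (H/2 - 1) := by
      intro u hu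
      have hu0 : 0 < u := lt_of_lt_of_le ht0 hu.1
      have h1 : u ^ ((H-1)/2) ≤ t ^ ((H-1)/2) :=
        Real.rpow_le_rpow_of_nonpos ht0 hu.1 (by linarith)
      calc |φ' u| ≤ K * u ^ (H - 3/2) := hbound u (hsub hu)
        _ = K * (u ^ ((H-1)/2) * u ^ (H/2 - 1)) := by
            rw [← Real.rpow_add hu0, show (H-1)/2 + (H/2 - 1) = H - 3/2 by ring]
        _ ≤ K * (t ^ ((H-1)/2) * u ^ (H/2 - 1)) := by
            have := Real.rpow_nonneg hu0.le (H/2 - 1)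
            have h2 : u ^ ((H-1)/2) * u ^ (H/2 - 1) ≤ t ^ ((H-1)/2) * u ^ (H/2 - 1) :=
              mul_le_mul_of_nonneg_right h1 this
            exact mul_le_mul_of_nonneg_left h2 hK.le
        _ = (K * t ^ ((H-1)/2)) * u ^ (H/2 - 1) := by ring
    have key := fencing ht0 (by linarith : t ≤ t + h) hq
      (fun u hu => hderiv u (hsub hu)) (by simpa using hb)
    have hbd : |φ (t + h) - φ t| ≤ (K * t ^ ((H-1)/2) / (H/2)) * (2*h) ^ (H/2) := by
      refine key.trans ?_
      have hc : 0 ≤ K * t ^ ((H-1)/2) / (H/2) := by positivity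
      have h3 : (t + h) ^ (H/2) - t ^ (H/2) ≤ (2*h) ^ (H/2) := by
        have h4 : (t + h) ^ (H/2) ≤ (2*h) ^ (H/2) :=
          Real.rpow_le_rpow (by linarith) (by linarith) hq.le
        have h5 : 0 ≤ t ^ (H/2) := Real.rpow_nonneg ht0.le _
        linarith
      exact mul_le_mul_of_nonneg_left h3 hc
    have hgt : g t = |φ (t + h) - φ t|^2 := by rw [sq_abs]
    rw [hgt]
    calc |φ (t + h) - φ t|^2 ≤ ((K * t ^ ((H-1)/2) / (H/2)) * (2*h) ^ (H/2))^2 :=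
          pow_le_pow_left₀ (abs_nonneg _) hbd 2
      _ = (K^2 * (t ^ ((H-1)/2))^2 / (H/2)^2) * ((2*h) ^ (H/2))^2 := by ring
      _ = (K^2 * t ^ (H-1) / (H/2)^2) * (2*h) ^ H := by
          rw [sq_rpow' ((H-1)/2) ht0, sq_rpow' (H/2) (by linarith : (0:ℝ) < 2*h),
            show 2*((H-1)/2) = H - 1 by ring, show 2*(H/2) = H by ring]
      _ = (K^2 * t ^ (H-1) / (H/2)^2) * (2 ^ H * h ^ H) := by
          rw [Real.mul_rpow (by norm_num) hh0.le]
      _ = A * h ^ H * t ^ (H-1) := by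
          rw [hAdef]; field_simp; ring
  -- pointwise bound on Ioc h T
  have step2 : ∀ t ∈ Set.Ioc h T, g t ≤ K^2 * h^2 * t ^ (2*H - 3) := by
    intro t ht
    obtain ⟨hht, htT⟩ := ht
    have ht0 : 0 < t := lt_trans hh0 hht
    have hsub : Set.Icc t (t + h) ⊆ Set.Ioc (0:ℝ) (2*T) := by
      intro u hu
      exact ⟨lt_of_lt_of_le ht0 hu.1, by linarith [hu.2]⟩
    have hb : ∀ u ∈ Set.Icc t (t + h), |φ' u| ≤ (K * t ^ (H - 3/2)) * u ^ ((1:ℝ) - 1) := by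
      intro u hu
      have hu0 : 0 < u := lt_of_lt_of_le ht0 hu.1
      have h1 : u ^ (H - 3/2) ≤ t ^ (H - 3/2) :=
        Real.rpow_le_rpow_of_nonpos ht0 hu.1 (by linarith)
      calc |φ' u| ≤ K * u ^ (H - 3/2) := hbound u (hsub hu)
        _ ≤ K * t ^ (H - 3/2) := mul_le_mul_of_nonneg_left h1 hK.le
        _ = (K * t ^ (H - 3/2)) * u ^ ((1:ℝ) - 1) := by
            rw [sub_self, Real.rpow_zero, mul_one]
    have key := fencing ht0 (by linarith : t ≤ t + h) one_pos
      (fun u hu => hderiv u (hsub hu)) hb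
    rw [Real.rpow_one, Real.rpow_one, div_one, add_sub_cancel_left] at key
    have hgt : g t = |φ (t + h) - φ t|^2 := by rw [sq_abs]
    rw [hgt]
    calc |φ (t + h) - φ t|^2 ≤ (K * t ^ (H - 3/2) * h)^2 :=
          pow_le_pow_left₀ (abs_nonneg _) key 2
      _ = K^2 * h^2 * (t ^ (H - 3/2))^2 := by ring
      _ = K^2 * h^2 * t ^ (2*H - 3) := by
          rw [sq_rpow' (H - 3/2) ht0, show 2*(H - 3/2) = 2*H - 3 by ring]
  -- integrability
  have M1 : IntegrableOn (fun t => A * h ^ H * t ^ (H - 1)) (Set.Ioc (0:ℝ) h) := by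
    have := (intervalIntegral.intervalIntegrable_rpow' (a := 0) (b := h)
      (r := H - 1) (by linarith)).const_mul (A * h ^ H)
    rwa [intervalIntegrable_iff_integrableOn_Ioc_of_le hh0.le] at this
  have M2 : IntegrableOn (fun t => K^2 * h^2 * t ^ (2*H - 3)) (Set.Ioc h T) := by
    have hc : ContinuousOn (fun t : ℝ => K^2 * h^2 * t ^ (2*H - 3)) (Set.Icc h T) := by
      apply continuousOn_const.mul
      exact fun x hx =>
        (Real.continuousAt_rpow_const x _ (Or.inl (ne_of_gt (lt_of_lt_of_le hh0 hx.1)))).continuousWithinAt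
    exact (hc.integrableOn_Icc).mono_set Set.Ioc_subset_Icc_self
  have Ig1 : IntegrableOn g (Set.Ioc (0:ℝ) h) := by
    apply M1.mono' ((hgcont.mono (Set.Ioc_subset_Ioc le_rfl hhT)).aestronglyMeasurable measurableSet_Ioc)
    refine (ae_restrict_iff' measurableSet_Ioc).2 (ae_of_all _ ?_)
    intro t ht
    rw [Real.norm_eq_abs, abs_of_nonneg (sq_nonneg _)]
    exact step1 t ht
  have Ig2 : IntegrableOn g (Set.Ioc h T) := by
    apply M2.mono' ((hgcont.mono (Set.Ioc_subset_Ioc hh0.le le_rfl)).aestronglyMeasurable measurableSet_Ioc)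
    refine (ae_restrict_iff' measurableSet_Ioc).2 (ae_of_all _ ?_)
    intro t ht
    rw [Real.norm_eq_abs, abs_of_nonneg (sq_nonneg _)]
    exact step2 t ht
  -- split the integral
  have hsplit : ∫ t in Set.Ioc (0:ℝ) T, g t
      = (∫ t in Set.Ioc (0:ℝ) h, g t) + ∫ t in Set.Ioc h T, g t := by
    rw [← MeasureTheory.setIntegral_union (Set.Ioc_disjoint_Ioc_of_le le_rfl) measurableSet_Ioc Ig1 Ig2,
      Set.Ioc_union_Ioc_eq_Ioc hh0.le hhT]
  -- estimate piece 1
  have int1 : ∫ t in Set.Ioc (0:ℝ) h, g t ≤ A / H * h ^ (2*H) := by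
    have hle := MeasureTheory.setIntegral_mono_on Ig1 M1 measurableSet_Ioc step1
    have hcomp : ∫ t in Set.Ioc (0:ℝ) h, A * h ^ H * t ^ (H - 1) = A / H * h ^ (2*H) := by
      rw [← intervalIntegral.integral_of_le hh0.le, intervalIntegral.integral_const_mul,
        integral_rpow (Or.inl (by linarith : (-1:ℝ) < H - 1))]
      have : H - 1 + 1 = H := by ring
      rw [this, Real.zero_rpow (ne_of_gt hH0)]
      rw [show (2*H) = H + H by ring, Real.rpow_add hh0]
      field_simp
      ring
    linarith [hle, le_of_eq hcomp]
  -- estimate piece 2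
  have int2 : ∫ t in Set.Ioc h T, g t ≤ K^2 / (2 - 2*H) * h ^ (2*H) := by
    have hle := MeasureTheory.setIntegral_mono_on Ig2 M2 measurableSet_Ioc step2
    have hcomp : ∫ t in Set.Ioc h T, K^2 * h^2 * t ^ (2*H - 3)
        = K^2 * h^2 * ((T ^ (2*H - 2) - h ^ (2*H - 2)) / (2*H - 2)) := by
      have h0mem : (0:ℝ) ∉ Set.uIcc h T := by
        rw [Set.uIcc_of_le hhT]
        simp only [Set.mem_Icc, not_and]
        intro h1
        linarith
      have hne : 2*H - 3 ≠ -1 := by intro hc; linarith [hc]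
      rw [← intervalIntegral.integral_of_le hhT, intervalIntegral.integral_const_mul,
        integral_rpow (Or.inr ⟨hne, h0mem⟩), show 2*H - 3 + 1 = 2*H - 2 by ring]
    have hbound2 : K^2 * h^2 * ((T ^ (2*H - 2) - h ^ (2*H - 2)) / (2*H - 2))
        ≤ K^2 / (2 - 2*H) * h ^ (2*H) := by
      have hTnn : (0:ℝ) ≤ T ^ (2*H - 2) := Real.rpow_nonneg hT.le _
      have hhp : (0:ℝ) < h ^ (2*H - 2) := Real.rpow_pos_of_pos hh0 _
      have hden : (0:ℝ) < 2 - 2*H := by linarith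
      have e1 : (T ^ (2*H - 2) - h ^ (2*H - 2)) / (2*H - 2)
          = (h ^ (2*H - 2) - T ^ (2*H - 2)) / (2 - 2*H) := by
        rw [div_eq_div_iff (by linarith) (by linarith)]
        ring
      rw [e1]
      have e2 : (h ^ (2*H - 2) - T ^ (2*H - 2)) / (2 - 2*H) ≤ h ^ (2*H - 2) / (2 - 2*H) := by
        gcongr
        linarith
      have e3 : h^2 * h^(2*H - 2) = h^(2*H) := by
        rw [← Real.rpow_natCast h 2, ← Real.rpow_add hh0]
        congr 1
        push_cast
        ring
      calc K^2 * h^2 * ((h ^ (2*H - 2) - T ^ (2*H - 2)) / (2 - 2*H))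
          ≤ K^2 * h^2 * (h ^ (2*H - 2) / (2 - 2*H)) :=
            mul_le_mul_of_nonneg_left e2 (by positivity)
        _ = K^2 / (2 - 2*H) * (h^2 * h^(2*H - 2)) := by ring
        _ = K^2 / (2 - 2*H) * h ^ (2*H) := by rw [e3]
    linarith [hle, le_of_eq hcomp]
  -- total bound
  have Itotal : ∫ t in Set.Ioc (0:ℝ) T, g t ≤ D * h ^ (2*H) := by
    rw [hsplit, hDdef, add_mul]
    linarith
  have Inonneg : 0 ≤ ∫ t in Set.Ioc (0:ℝ) T, g t :=
    setIntegral_nonneg measurableSet_Ioc (fun t _ => sq_nonneg _)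
  calc (∫ t in Set.Ioc (0:ℝ) T, g t) ^ ((1:ℝ)/2)
      ≤ (D * h ^ (2*H)) ^ ((1:ℝ)/2) := Real.rpow_le_rpow Inonneg Itotal (by norm_num)
    _ = D ^ ((1:ℝ)/2) * (h ^ (2*H)) ^ ((1:ℝ)/2) :=
        Real.mul_rpow hD.le (Real.rpow_nonneg hh0.le _)
    _ = D ^ ((1:ℝ)/2) * h ^ H := by
        rw [← Real.rpow_mul hh0.le, show (2*H)*((1:ℝ)/2) = H by ring]
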